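/- Let B be a standard one-dimensional Brownian motion started at 0, let M₀ ∈ ℝ, and let 0 < a < b and λ > 0. Then P(inf_{a ≤ t ≤ b} |M₀ + B_t| ≤ λ) ≤ P(inf_{a ≤ t ≤ b} |B_t| ≤ λ). -/

import Mathlib

open MeasureTheory ProbabilityTheory

/-- A standard one-dimensional Brownian motion started at `0`: measurable marginals,
`B 0 = 0` a.s., a.s. continuous paths, Gaussian increments `B t - B s ~ N(0, t-s)`,
and independent increments. -/
structure IsStandardBrownianMotion {Ω : Type*} [MeasurableSpace Ω]
    (P : Measure Ω) (B : ℝ → Ω → ℝ) : Prop where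
  measurable : ∀ t, Measurable (B t)
  init : ∀ᵐ ω ∂P, B 0 ω = 0
  cont : ∀ᵐ ω ∂P, Continuous fun t => B t ω
  gauss_incr : ∀ s t : ℝ, 0 ≤ s → s ≤ t →
    P.map (fun ω => B t ω - B s ω) = gaussianReal 0 ((t - s).toNNReal)
  indep_incr : ∀ (n : ℕ) (τ : Fin (n + 1) → ℝ), Monotone τ → (∀ i, 0 ≤ τ i) →
    iIndepFun
      (fun i : Fin n => fun ω => B (τ i.succ) ω - B (τ i.castSucc) ω) P

section BM18Aux

open Set Filter

lemma bm18_gauss_neg (v : NNReal) :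
    (gaussianReal 0 v).map (fun x : ℝ => -x) = gaussianReal 0 v := by
  have h := gaussianReal_map_const_mul (μ := 0) (v := v) (-1)
  have h1 : (NNReal.mk ((-1:ℝ)^2) (sq_nonneg _)) = 1 := by ext; norm_num
  rw [h1, one_mul, mul_zero] at h
  simpa only [neg_one_mul] using h

lemma bm18_tel {Ω : Type*} (B : ℝ → Ω → ℝ) {k : ℕ} (τ : Fin (k+1) → ℝ) (ω : Ω) (i : Fin (k+1)) :
    B (τ i) ω - B (τ 0) ω
      = ∑ j : Fin k, if (j:ℕ) < (i:ℕ) then B (τ j.succ) ω - B (τ j.castSucc) ω else 0 := by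
  induction i using Fin.induction with
  | zero => simp
  | succ m ih =>
    have hsplit : ∀ j : Fin k,
        (if (j:ℕ) < ((m.succ : Fin (k+1)):ℕ) then B (τ j.succ) ω - B (τ j.castSucc) ω else 0)
        = (if (j:ℕ) < ((m.castSucc : Fin (k+1)):ℕ) then B (τ j.succ) ω - B (τ j.castSucc) ω else 0)
          + (if j = m then B (τ j.succ) ω - B (τ j.castSucc) ω else 0) := by
      intro j
      have hs : ((m.succ : Fin (k+1)):ℕ) = (m:ℕ)+1 := rfl
      have hcs : ((m.castSucc : Fin (k+1)):ℕ) = (m:ℕ) := rfl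
      rw [hs, hcs]
      by_cases h1 : (j:ℕ) < (m:ℕ)
      · rw [if_pos (by omega), if_pos h1, if_neg (by intro he; subst he; omega), add_zero]
      · by_cases h2 : j = m
        · subst h2; rw [if_pos (by omega), if_neg (by omega), if_pos rfl, zero_add]
        · have h3 : (j:ℕ) ≠ (m:ℕ) := fun he => h2 (Fin.ext he)
          rw [if_neg (by omega), if_neg (by omega), if_neg h2, add_zero]
    rw [Finset.sum_congr rfl (fun j _ => hsplit j), Finset.sum_add_distrib,
      ← ih, Finset.sum_ite_eq' Finset.univ m]
    simp only [Finset.mem_univ, if_true]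
    ring

variable {Ω : Type*} [MeasurableSpace Ω] {P : Measure Ω} [IsProbabilityMeasure P] {B : ℝ → Ω → ℝ}

lemma bm18_map_sym (hB : IsStandardBrownianMotion P B) {k : ℕ} (τ : Fin (k+1) → ℝ)
    (hmono : Monotone τ) (h0 : τ 0 = 0) :
    P.map (fun ω (i : Fin (k+1)) => B (τ i) ω)
      = P.map (fun ω (i : Fin (k+1)) => -B (τ i) ω) := by
  classical
  set inc : Fin k → Ω → ℝ := fun j ω => B (τ j.succ) ω - B (τ j.castSucc) ω with hinc
  have hincm : ∀ j, Measurable (inc j) := fun j => (hB.measurable _).sub (hB.measurable _)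
  have hnonneg : ∀ i, 0 ≤ τ i := fun i => h0 ▸ hmono (Fin.zero_le i)
  have hInd := hB.indep_incr k τ hmono hnonneg
  set D : Fin k → Measure ℝ := fun j => gaussianReal 0 ((τ j.succ - τ j.castSucc).toNNReal) with hD
  have hlawj : ∀ j, P.map (inc j) = D j := fun j =>
    hB.gauss_incr (τ j.castSucc) (τ j.succ) (hnonneg _) (hmono (Fin.castSucc_le_succ j))
  have hVmeas : Measurable (fun ω (j : Fin k) => inc j ω) :=
    measurable_pi_lambda _ (fun j => hincm j)
  have hVmeas' : Measurable (fun ω (j : Fin k) => -inc j ω) :=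
    measurable_pi_lambda _ (fun j => (hincm j).neg)
  -- both increment vectors have law `Measure.pi D`
  have hpi1 : P.map (fun ω (j : Fin k) => inc j ω) = Measure.pi D := by
    symm
    apply Measure.pi_eq
    intro s hs
    rw [Measure.map_apply hVmeas (MeasurableSet.univ_pi hs)]
    have hpre : (fun ω (j : Fin k) => inc j ω) ⁻¹' (univ.pi s) = ⋂ j, inc j ⁻¹' s j := by
      ext ω; simp [Set.mem_pi]
    rw [hpre]
    have h := hInd.measure_inter_preimage_eq_mul Finset.univ (sets := s) (fun i _ => hs i)
    have hins : (⋂ j ∈ Finset.univ, inc j ⁻¹' s j) = ⋂ j, inc j ⁻¹' s j := by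
      simp
    rw [hins] at h
    rw [h]
    exact Finset.prod_congr rfl (fun j _ => by rw [← hlawj j, Measure.map_apply (hincm j) (hs j)])
  have hpi2 : P.map (fun ω (j : Fin k) => -inc j ω) = Measure.pi D := by
    symm
    apply Measure.pi_eq
    intro s hs
    rw [Measure.map_apply hVmeas' (MeasurableSet.univ_pi hs)]
    have hpre : (fun ω (j : Fin k) => -inc j ω) ⁻¹' (univ.pi s)
        = ⋂ j, inc j ⁻¹' ((fun x : ℝ => -x) ⁻¹' s j) := by
      ext ω; simp [Set.mem_pi]
    rw [hpre]
    have h := hInd.measure_inter_preimage_eq_mul Finset.univ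
      (sets := fun j => (fun x : ℝ => -x) ⁻¹' s j)
      (fun i _ => measurable_neg (hs i))
    have hins : (⋂ j ∈ Finset.univ, inc j ⁻¹' ((fun x : ℝ => -x) ⁻¹' s j))
        = ⋂ j, inc j ⁻¹' ((fun x : ℝ => -x) ⁻¹' s j) := by simp
    rw [hins] at h
    rw [h]
    refine Finset.prod_congr rfl (fun j _ => ?_)
    rw [← Measure.map_apply (hincm j) (measurable_neg (hs j)), hlawj j,
      ← Measure.map_apply measurable_neg (hs j), bm18_gauss_neg]
  -- the linear partial-sum map
  set L : (Fin k → ℝ) → (Fin (k+1) → ℝ) :=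
    fun x i => ∑ j : Fin k, if (j:ℕ) < (i:ℕ) then x j else 0 with hL
  have hLmeas : Measurable L := by
    apply measurable_pi_lambda
    intro i
    apply Finset.measurable_sum
    intro j _
    by_cases h : (j:ℕ) < (i:ℕ) <;> simp [h, measurable_pi_apply]
  have hLneg : ∀ x, L (fun j => -x j) = fun i => -(L x i) := by
    intro x
    funext i
    rw [hL]
    simp only
    rw [← Finset.sum_neg_distrib]
    exact Finset.sum_congr rfl (fun j _ => by split <;> simp
)
  have haeY : (fun ω (i : Fin (k+1)) => B (τ i) ω) =ᵐ[P] (fun ω => L (fun j => inc j ω)) := by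
    filter_upwards [hB.init] with ω hω
    funext i
    rw [hL]
    simp only
    rw [← bm18_tel B τ ω i, h0, hω]
    ring
  have haeY' : (fun ω (i : Fin (k+1)) => -B (τ i) ω) =ᵐ[P] (fun ω => L (fun j => -inc j ω)) := by
    filter_upwards [hB.init] with ω hω
    funext i
    rw [hLneg]
    simp only [neg_inj]
    rw [hL]
    simp only
    rw [← bm18_tel B τ ω i, h0, hω]
    ring
  calc P.map (fun ω (i : Fin (k+1)) => B (τ i) ω)
      = P.map (fun ω => L (fun j => inc j ω)) := Measure.map_congr haeY
    _ = (P.map (fun ω (j : Fin k) => inc j ω)).map L := (Measure.map_map hLmeas hVmeas).symm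
    _ = (Measure.pi D).map L := by rw [hpi1]
    _ = (P.map (fun ω (j : Fin k) => -inc j ω)).map L := by rw [hpi2]
    _ = P.map (fun ω => L (fun j => -inc j ω)) := Measure.map_map hLmeas hVmeas'
    _ = P.map (fun ω (i : Fin (k+1)) => -B (τ i) ω) := (Measure.map_congr haeY').symm

lemma bm18_indep_tuple (hB : IsStandardBrownianMotion P B) {k : ℕ} (τ : Fin (k+1) → ℝ)
    (hmono : Monotone τ) (h0 : τ 0 = 0) (i₀ : Fin (k+1)) :
    IndepFun (fun ω (i : Fin (k+1)) => if i₀ ≤ i then B (τ i) ω - B (τ i₀) ω else 0)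
      (B (τ i₀)) P := by
  classical
  set inc : Fin k → Ω → ℝ := fun j ω => B (τ j.succ) ω - B (τ j.castSucc) ω with hinc
  have hincm : ∀ j, Measurable (inc j) := fun j => (hB.measurable _).sub (hB.measurable _)
  have hnonneg : ∀ i, 0 ≤ τ i := fun i => h0 ▸ hmono (Fin.zero_le i)
  have hInd := hB.indep_incr k τ hmono hnonneg
  set S : Finset (Fin k) := Finset.univ.filter (fun j => (j:ℕ) < (i₀:ℕ)) with hS
  set T : Finset (Fin k) := Finset.univ.filter (fun j => ¬ (j:ℕ) < (i₀:ℕ)) with hT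
  have hdisj : Disjoint T S := (Finset.disjoint_filter_filter_not Finset.univ Finset.univ _).symm
  have h := hInd.indepFun_finset T S hdisj hincm
  set g₁ : ((i : T) → ℝ) → (Fin (k+1) → ℝ) := fun x i =>
    if i₀ ≤ i then (∑ j : T, if ((j : Fin k):ℕ) < (i:ℕ) then x j else 0) else 0 with hg₁
  set g₂ : ((i : S) → ℝ) → ℝ := fun x => ∑ j : S, x j with hg₂
  have hg₁meas : Measurable g₁ := by
    apply measurable_pi_lambda
    intro i
    by_cases hcase : i₀ ≤ i
    · have : (fun x : (i : T) → ℝ => g₁ x i)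
          = fun x => ∑ j : T, if ((j : Fin k):ℕ) < (i:ℕ) then x j else 0 := by
        funext x; rw [hg₁]; exact if_pos hcase
      rw [this]
      apply Finset.measurable_sum
      intro j _
      by_cases h2 : ((j : Fin k):ℕ) < (i:ℕ) <;> simp [h2, measurable_pi_apply]
    · have : (fun x : (i : T) → ℝ => g₁ x i) = fun _ => 0 := by
        funext x; rw [hg₁]; exact if_neg hcase
      rw [this]
      exact measurable_const
  have hg₂meas : Measurable g₂ := Finset.measurable_sum _ (fun j _ => measurable_pi_apply j)
  have h2 := h.comp hg₁meas hg₂meas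
  have heq1 : (g₁ ∘ fun ω (i : T) => inc i ω)
      = fun ω (i : Fin (k+1)) => if i₀ ≤ i then B (τ i) ω - B (τ i₀) ω else 0 := by
    funext ω
    funext i
    simp only [Function.comp_apply, hg₁]
    by_cases hcase : i₀ ≤ i
    · rw [if_pos hcase, if_pos hcase]
      have hi₀i : (i₀:ℕ) ≤ (i:ℕ) := hcase
      have hsum : ∑ j : T, (if ((j : Fin k):ℕ) < (i:ℕ) then inc (j : Fin k) ω else 0)
          = ∑ j ∈ T, (if (j:ℕ) < (i:ℕ) then inc j ω else 0) :=
        Finset.sum_coe_sort T (fun j => if (j:ℕ) < (i:ℕ) then inc j ω else 0)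
      rw [hsum, hT, Finset.sum_filter]
      have : B (τ i) ω - B (τ i₀) ω
          = (B (τ i) ω - B (τ 0) ω) - (B (τ i₀) ω - B (τ 0) ω) := by ring
      rw [this, bm18_tel B τ ω i, bm18_tel B τ ω i₀, ← Finset.sum_sub_distrib]
      apply Finset.sum_congr rfl
      intro j _
      by_cases ha1 : (j:ℕ) < (i₀:ℕ)
      · rw [if_neg (not_not_intro ha1), if_pos (show (j:ℕ) < (i:ℕ) by omega),
          if_pos ha1, sub_self]
      · rw [if_pos ha1, if_neg ha1, sub_zero]
    · rw [if_neg hcase, if_neg hcase]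
  have heq2 : (g₂ ∘ fun ω (i : S) => inc i ω) = fun ω => B (τ i₀) ω - B (τ 0) ω := by
    funext ω
    simp only [Function.comp_apply, hg₂]
    rw [Finset.sum_coe_sort S (fun j => inc j ω), hS, bm18_tel B τ ω i₀, Finset.sum_filter]
  rw [heq1, heq2] at h2
  apply IndepFun.congr (f := fun ω (i : Fin (k+1)) => if i₀ ≤ i then B (τ i) ω - B (τ i₀) ω else 0)
    (g := fun ω => B (τ i₀) ω - B (τ 0) ω) h2 (Filter.EventuallyEq.refl _ _)
  filter_upwards [hB.init] with ω hω
  rw [h0, hω, sub_zero]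

lemma bm18_finite_sym (hB : IsStandardBrownianMotion P B) (v : ℕ → ℝ)
    (hv : ∀ n, 0 < v n) (N : ℕ) (c : ℝ) :
    P {ω | ∃ n, n < N ∧ c < B (v n) ω} = P {ω | ∃ n, n < N ∧ B (v n) ω < -c} := by
  classical
  set s₀ : Finset ℝ := insert (0:ℝ) ((Finset.range N).image v) with hs₀
  have h0mem : (0:ℝ) ∈ s₀ := Finset.mem_insert_self _ _
  have hpos : ∀ r ∈ s₀, 0 ≤ r := by
    intro r hr
    rcases Finset.mem_insert.mp hr with h | h
    · simp [h]
    · obtain ⟨n, _, rfl⟩ := Finset.mem_image.mp h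
      exact (hv n).le
  have hcard : s₀.card = (s₀.card - 1) + 1 := by
    have : 0 < s₀.card := Finset.card_pos.mpr ⟨0, h0mem⟩
    omega
  set k := s₀.card - 1 with hk
  set e := s₀.orderIsoOfFin hcard with he
  set τ : Fin (k+1) → ℝ := fun i => (e i : ℝ) with hτ
  have hmono : Monotone τ := fun i j hij => Subtype.coe_le_coe.mpr (e.monotone hij)
  have hτmem : ∀ i, τ i ∈ s₀ := fun i => (e i).2
  have hτ0 : τ 0 = 0 := by
    refine le_antisymm ?_ (hpos _ (hτmem 0))
    have h1 := hmono (Fin.zero_le (e.symm ⟨0, h0mem⟩))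
    have h2 : τ (e.symm ⟨0, h0mem⟩) = 0 := by
      rw [hτ]
      simp only [OrderIso.apply_symm_apply]
    rwa [h2] at h1
  have hvmem : ∀ n, n < N → v n ∈ s₀ := fun n hn =>
    Finset.mem_insert_of_mem (Finset.mem_image_of_mem v (Finset.mem_range.mpr hn))
  set J : ℕ → Fin (k+1) := fun n => if h : n < N then e.symm ⟨v n, hvmem n h⟩ else 0 with hJdef
  have hJ : ∀ n, n < N → τ (J n) = v n := by
    intro n hn
    rw [hJdef]
    simp only [hn, dif_pos]
    rw [hτ]
    simp only [OrderIso.apply_symm_apply]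
  set U : Set (Fin (k+1) → ℝ) := ⋃ n, ⋃ (_ : n < N), {y | c < y (J n)} with hU
  have hUmeas : MeasurableSet U := MeasurableSet.iUnion fun n => MeasurableSet.iUnion fun _ =>
    measurableSet_lt measurable_const (measurable_pi_apply _)
  have hYmeas : Measurable (fun ω (i : Fin (k+1)) => B (τ i) ω) :=
    measurable_pi_lambda _ (fun i => hB.measurable (τ i))
  have hYnegmeas : Measurable (fun ω (i : Fin (k+1)) => -B (τ i) ω) :=
    measurable_pi_lambda _ (fun i => (hB.measurable (τ i)).neg)
  have hset1 : {ω | ∃ n, n < N ∧ c < B (v n) ω}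
      = (fun ω (i : Fin (k+1)) => B (τ i) ω) ⁻¹' U := by
    ext ω
    simp only [mem_setOf_eq, mem_preimage, hU, mem_iUnion]
    constructor
    · rintro ⟨n, hn, h⟩
      exact ⟨n, hn, by rw [hJ n hn]; exact h⟩
    · rintro ⟨n, hn, h⟩
      rw [hJ n hn] at h
      exact ⟨n, hn, h⟩
  have hset2 : {ω | ∃ n, n < N ∧ B (v n) ω < -c}
      = (fun ω (i : Fin (k+1)) => -B (τ i) ω) ⁻¹' U := by
    ext ω
    simp only [mem_setOf_eq, mem_preimage, hU, mem_iUnion]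
    constructor
    · rintro ⟨n, hn, h⟩
      refine ⟨n, hn, ?_⟩
      rw [hJ n hn]
      exact lt_neg.mpr h
    · rintro ⟨n, hn, h⟩
      rw [hJ n hn] at h
      exact ⟨n, hn, lt_neg.mp h⟩
  rw [hset1, hset2, ← Measure.map_apply hYmeas hUmeas, ← Measure.map_apply hYnegmeas hUmeas,
    bm18_map_sym hB τ hmono hτ0]

lemma bm18_finite_indep (hB : IsStandardBrownianMotion P B) {a : ℝ} (ha : 0 < a)
    (v : ℕ → ℝ) (hv : ∀ n, a ≤ v n) (N : ℕ) :
    IndepFun (fun ω (n : Fin N) => B (v (n:ℕ)) ω - B a ω) (B a) P := by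
  classical
  set s₀ : Finset ℝ := insert (0:ℝ) (insert a ((Finset.range N).image v)) with hs₀
  have h0mem : (0:ℝ) ∈ s₀ := Finset.mem_insert_self _ _
  have hamem : a ∈ s₀ := Finset.mem_insert_of_mem (Finset.mem_insert_self _ _)
  have hpos : ∀ r ∈ s₀, 0 ≤ r := by
    intro r hr
    rcases Finset.mem_insert.mp hr with h | h
    · simp [h]
    rcases Finset.mem_insert.mp h with h' | h'
    · exact h' ▸ ha.le
    · obtain ⟨n, _, rfl⟩ := Finset.mem_image.mp h'
      exact (ha.le.trans (hv n))
  have hcard : s₀.card = (s₀.card - 1) + 1 := by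
    have : 0 < s₀.card := Finset.card_pos.mpr ⟨0, h0mem⟩
    omega
  set k := s₀.card - 1 with hk
  set e := s₀.orderIsoOfFin hcard with he
  set τ : Fin (k+1) → ℝ := fun i => (e i : ℝ) with hτ
  have hmono : Monotone τ := fun i j hij => Subtype.coe_le_coe.mpr (e.monotone hij)
  have hτmem : ∀ i, τ i ∈ s₀ := fun i => (e i).2
  have hτ0 : τ 0 = 0 := by
    refine le_antisymm ?_ (hpos _ (hτmem 0))
    have h1 := hmono (Fin.zero_le (e.symm ⟨0, h0mem⟩))
    have h2 : τ (e.symm ⟨0, h0mem⟩) = 0 := by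
      rw [hτ]; simp only [OrderIso.apply_symm_apply]
    rwa [h2] at h1
  have hrefl : ∀ i j, τ i ≤ τ j ↔ i ≤ j := by
    intro i j
    constructor
    · intro h
      exact e.le_iff_le.mp (Subtype.coe_le_coe.mp h)
    · exact fun h => hmono h
  set i₀ : Fin (k+1) := e.symm ⟨a, hamem⟩ with hi₀
  have hτi₀ : τ i₀ = a := by
    rw [hτ, hi₀]; simp only [OrderIso.apply_symm_apply]
  have hvmem : ∀ n : Fin N, v (n:ℕ) ∈ s₀ := fun n =>
    Finset.mem_insert_of_mem (Finset.mem_insert_of_mem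
      (Finset.mem_image_of_mem v (Finset.mem_range.mpr n.2)))
  set J : Fin N → Fin (k+1) := fun n => e.symm ⟨v (n:ℕ), hvmem n⟩ with hJdef
  have hJ : ∀ n, τ (J n) = v (n:ℕ) := by
    intro n
    rw [hJdef, hτ]; simp only [OrderIso.apply_symm_apply]
  have hkey := bm18_indep_tuple hB τ hmono hτ0 i₀
  set φ : (Fin (k+1) → ℝ) → (Fin N → ℝ) := fun y n => y (J n) with hφ
  have hφmeas : Measurable φ := measurable_pi_lambda _ (fun n => measurable_pi_apply _)
  have h2 := hkey.comp hφmeas (measurable_id : Measurable (fun x : ℝ => x))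
  have heq : (φ ∘ fun ω (i : Fin (k+1)) => if i₀ ≤ i then B (τ i) ω - B (τ i₀) ω else 0)
      = fun ω (n : Fin N) => B (v (n:ℕ)) ω - B a ω := by
    funext ω n
    simp only [Function.comp_apply, hφ]
    have hle : i₀ ≤ J n := (hrefl i₀ (J n)).mp (by rw [hτi₀, hJ n]; exact hv _)
    rw [if_pos hle, hJ n, hτi₀]
  rw [heq] at h2
  rwa [hτi₀] at h2

lemma bm18_high_eq_low (hB : IsStandardBrownianMotion P B) (v : ℕ → ℝ)
    (hv : ∀ n, 0 < v n) (c : ℝ) :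
    P (⋃ n, {ω | c < B (v n) ω}) = P (⋃ n, {ω | B (v n) ω < -c}) := by
  have key : ∀ (A : ℕ → Set Ω),
      P (⋃ n, A n) = ⨆ N, P {ω | ∃ n, n < N ∧ ω ∈ A n} := by
    intro A
    have h1 : (⋃ n, A n) = ⋃ N, {ω | ∃ n, n < N ∧ ω ∈ A n} := by
      ext ω; simp only [mem_iUnion, mem_setOf_eq]
      exact ⟨fun ⟨n, h⟩ => ⟨n+1, n, Nat.lt_succ_self n, h⟩, fun ⟨N, n, _, h⟩ => ⟨n, h⟩⟩
    rw [h1]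
    apply Directed.measure_iUnion
    apply Monotone.directed_le
    intro N M hNM ω
    simp only [mem_setOf_eq]
    rintro ⟨n, hn, h⟩
    exact ⟨n, lt_of_lt_of_le hn hNM, h⟩
  rw [key (fun n => {ω | c < B (v n) ω}), key (fun n => {ω | B (v n) ω < -c})]
  exact iSup_congr (fun N => bm18_finite_sym hB v hv N c)

lemma bm18_indep_W (hB : IsStandardBrownianMotion P B) {a : ℝ} (ha : 0 < a)
    (v : ℕ → ℝ) (hv : ∀ n, a ≤ v n) :
    IndepFun (fun ω (n : ℕ) => B (v n) ω - B a ω) (B a) P := by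
  classical
  set W : Ω → ℕ → ℝ := fun ω n => B (v n) ω - B a ω with hW
  set tup : (N : ℕ) → Ω → (Fin N → ℝ) := fun N ω n => B (v (n:ℕ)) ω - B a ω with htup
  have htupmeas : ∀ N, Measurable (tup N) :=
    fun N => measurable_pi_lambda _ (fun n => (hB.measurable _).sub (hB.measurable _))
  have hWmeas : Measurable W :=
    measurable_pi_lambda _ (fun n => (hB.measurable _).sub (hB.measurable _))
  set m : ℕ → MeasurableSpace Ω := fun N => MeasurableSpace.comap (tup N) inferInstance with hm
  have hmono : Monotone m := by
    intro N M hNM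
    have : tup N = (fun (y : Fin M → ℝ) (n : Fin N) => y (Fin.castLE hNM n)) ∘ tup M := by
      funext ω n; simp [htup]
    rw [hm]
    simp only
    rw [this, ← MeasurableSpace.comap_comp]
    exact MeasurableSpace.comap_mono
      ((measurable_pi_lambda _ (fun n => measurable_pi_apply _)).comap_le)
  have hfin : ∀ N, Indep (m N) (MeasurableSpace.comap (B a) inferInstance) P := by
    intro N
    rw [hm]
    exact (IndepFun_iff_Indep _ _ _).mp (bm18_finite_indep hB ha v hv N)
  have hsup := indep_iSup_of_monotone hfin
    (fun N => (htupmeas N).comap_le) (hB.measurable a).comap_le hmono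
  have hiSup : (⨆ N, m N) = MeasurableSpace.comap W inferInstance := by
    apply le_antisymm
    · apply iSup_le
      intro N
      have : tup N = (fun (y : ℕ → ℝ) (n : Fin N) => y (n:ℕ)) ∘ W := by
        funext ω n; simp [htup, hW]
      rw [hm]
      simp only
      rw [this, ← MeasurableSpace.comap_comp]
      exact MeasurableSpace.comap_mono
        ((measurable_pi_lambda _ (fun n => measurable_pi_apply _)).comap_le)
    · have hpi : (MeasurableSpace.pi : MeasurableSpace (ℕ → ℝ))
          = ⨆ n : ℕ, MeasurableSpace.comap (fun y : ℕ → ℝ => y n) inferInstance := rfl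
      rw [hpi, MeasurableSpace.comap_iSup]
      apply iSup_le
      intro n
      rw [MeasurableSpace.comap_comp]
      have : ((fun y : ℕ → ℝ => y n) ∘ W) = fun ω => tup (n+1) ω ⟨n, Nat.lt_succ_self n⟩ := by
        funext ω; simp [htup, hW]
      rw [this]
      have h2 : (fun ω => tup (n+1) ω ⟨n, Nat.lt_succ_self n⟩)
          = (fun y : Fin (n+1) → ℝ => y ⟨n, Nat.lt_succ_self n⟩) ∘ tup (n+1) := rfl
      rw [h2, ← MeasurableSpace.comap_comp]
      refine le_trans (MeasurableSpace.comap_mono ((measurable_pi_apply _).comap_le)) ?_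
      exact le_iSup m (n+1)
  rw [hiSup] at hsup
  exact (IndepFun_iff_Indep _ _ _).mpr hsup

lemma bm18_pdf_reflect {v : NNReal} {c t : ℝ} (hc : 0 ≤ c) (ht : c ≤ t) :
    gaussianPDFReal 0 v t ≤ gaussianPDFReal 0 v (2*c - t) := by
  unfold gaussianPDFReal
  apply mul_le_mul_of_nonneg_left _ (by positivity)
  apply Real.exp_le_exp.mpr
  rcases eq_or_ne v 0 with hv | hv
  · simp [hv]
  have hvpos : (0:ℝ) < (v:ℝ) := by positivity
  have h2 : -(t - 0)^2 ≤ -(2*c - t - 0)^2 := by nlinarith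
  gcongr

lemma bm18_pdf_shift (c : ℝ) (v : NNReal) :
    (fun t => gaussianPDFReal 0 v (2*c - t)) = gaussianPDFReal (2*c) v := by
  funext t
  unfold gaussianPDFReal
  congr 1
  ring_nf

lemma bm18_gauss_key {v : NNReal} (hv : v ≠ 0) {c x : ℝ} (hc : 0 ≤ c) (hx : 0 ≤ x) :
    2 * gaussianReal 0 v (Ici c) ≤ gaussianReal 0 v (Ici (c - x)) + gaussianReal 0 v (Ici (c + x)) := by
  set γ := gaussianReal 0 v with hγ
  have key : γ (Ico c (c+x)) ≤ γ (Ico (c-x) c) := by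
    rw [hγ, gaussianReal_apply_eq_integral _ hv, gaussianReal_apply_eq_integral _ hv]
    apply ENNReal.ofReal_le_ofReal
    have hint : Integrable (gaussianPDFReal 0 v) := integrable_gaussianPDFReal 0 v
    have hint2 : Integrable (gaussianPDFReal (2*c) v) := integrable_gaussianPDFReal (2*c) v
    rw [integral_Ico_eq_integral_Ioo, integral_Ico_eq_integral_Ioo, ← integral_Ioc_eq_integral_Ioo, ← integral_Ioc_eq_integral_Ioo,
      ← intervalIntegral.integral_of_le (by linarith : c ≤ c + x),
      ← intervalIntegral.integral_of_le (by linarith : c - x ≤ c)]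
    have hsub : ∫ t in c..(c+x), gaussianPDFReal 0 v (2*c - t)
        = ∫ t in (c-x)..c, gaussianPDFReal 0 v t := by
      rw [intervalIntegral.integral_comp_sub_left (gaussianPDFReal 0 v) (2*c)]
      congr 1 <;> ring
    rw [← hsub]
    apply intervalIntegral.integral_mono_on (by linarith)
      hint.intervalIntegrable ?_ ?_
    · rw [show (fun t => gaussianPDFReal 0 v (2*c - t)) = gaussianPDFReal (2*c) v from bm18_pdf_shift c v]
      exact hint2.intervalIntegrable
    · intro t htmem
      exact bm18_pdf_reflect hc htmem.1
  have hd1 : Disjoint (Ico (c-x) c) (Ici c) := by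
    simp [Set.disjoint_left, mem_Ico, mem_Ici]
  have hd2 : Disjoint (Ico c (c+x)) (Ici (c+x)) := by
    simp [Set.disjoint_left, mem_Ico, mem_Ici]
  have h1 : γ (Ici (c-x)) = γ (Ico (c-x) c) + γ (Ici c) := by
    rw [← measure_union hd1 measurableSet_Ici, Ico_union_Ici_eq_Ici (by linarith)]
  have h2 : γ (Ici c) = γ (Ico c (c+x)) + γ (Ici (c+x)) := by
    rw [← measure_union hd2 measurableSet_Ici, Ico_union_Ici_eq_Ici (by linarith)]
  calc 2 * γ (Ici c) = γ (Ici c) + γ (Ici c) := two_mul _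
  _ = γ (Ici c) + (γ (Ico c (c+x)) + γ (Ici (c+x))) := by rw [← h2]
  _ = (γ (Ici c) + γ (Ico c (c+x))) + γ (Ici (c+x)) := by ring
  _ ≤ (γ (Ici c) + γ (Ico (c-x) c)) + γ (Ici (c+x)) := by
      exact add_le_add (add_le_add le_rfl key) le_rfl
  _ = γ (Ici (c-x)) + γ (Ici (c+x)) := by rw [h1, add_comm (γ (Ico (c-x) c))]

lemma bm18_conv (hB : IsStandardBrownianMotion P B) {a : ℝ} (ha : 0 < a)
    (v : ℕ → ℝ) (hv0 : v 0 = a) (hv : ∀ n, a ≤ v n)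
    {lam' x : ℝ} (hlam' : 0 < lam') (hx : 0 ≤ x) :
    2 * P (⋂ n, {ω | lam' ≤ B (v n) ω})
      ≤ P (⋂ n, {ω | lam' - x ≤ B (v n) ω}) + P (⋂ n, {ω | lam' + x ≤ B (v n) ω}) := by
  classical
  set W : Ω → ℕ → ℝ := fun ω n => B (v n) ω - B a ω with hWdef
  have hWmeas : Measurable W :=
    measurable_pi_lambda _ (fun n => (hB.measurable _).sub (hB.measurable _))
  have hGmeas : Measurable (B a) := hB.measurable a
  set γ : Measure ℝ := P.map (B a) with hγdef
  have hγ : γ = gaussianReal 0 a.toNNReal := by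
    have h1 : (fun ω => B a ω - B 0 ω) =ᵐ[P] B a := by
      filter_upwards [hB.init] with ω hω
      rw [hω, sub_zero]
    rw [hγdef, ← Measure.map_congr h1]
    have := hB.gauss_incr 0 a le_rfl ha.le
    rw [this, sub_zero]
  set ν : Measure (ℕ → ℝ) := P.map W with hνdef
  haveI : IsProbabilityMeasure ν := Measure.isProbabilityMeasure_map hWmeas.aemeasurable
  haveI : IsProbabilityMeasure γ := Measure.isProbabilityMeasure_map hGmeas.aemeasurable
  have hindep : IndepFun W (B a) P := bm18_indep_W hB ha v hv
  have hprod : P.map (fun ω => (W ω, B a ω)) = ν.prod γ :=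
    (indepFun_iff_map_prod_eq_prod_map_map hWmeas.aemeasurable hGmeas.aemeasurable).mp hindep
  have hSmeas : ∀ r : ℝ, MeasurableSet {p : (ℕ → ℝ) × ℝ | ∀ n, r ≤ p.2 + p.1 n} := by
    intro r
    have h : {p : (ℕ → ℝ) × ℝ | ∀ n, r ≤ p.2 + p.1 n}
        = ⋂ n, {p : (ℕ → ℝ) × ℝ | r ≤ p.2 + p.1 n} := by
      ext p; simp
    rw [h]
    exact MeasurableSet.iInter fun n => measurableSet_le measurable_const
      (measurable_snd.add ((measurable_pi_apply n).comp measurable_fst))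
  have hQ : ∀ r : ℝ, P (⋂ n, {ω | r ≤ B (v n) ω}) = ∫⁻ w, γ {g | ∀ n, r ≤ g + w n} ∂ν := by
    intro r
    have hpre : (⋂ n, {ω | r ≤ B (v n) ω})
        = (fun ω => (W ω, B a ω)) ⁻¹' {p : (ℕ → ℝ) × ℝ | ∀ n, r ≤ p.2 + p.1 n} := by
      ext ω
      simp only [mem_iInter, mem_setOf_eq, mem_preimage, hWdef]
      constructor
      · intro h n; linarith [h n]
      · intro h n; linarith [h n]
    rw [hpre, ← Measure.map_apply (hWmeas.prodMk hGmeas) (hSmeas r), hprod,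
      Measure.prod_apply (hSmeas r)]
    rfl
  have hw0 : ∀ᵐ w ∂ν, w 0 = 0 := by
    have hms : MeasurableSet {w : ℕ → ℝ | w 0 = 0} :=
      measurableSet_eq_fun (measurable_pi_apply 0) measurable_const
    rw [hνdef]
    rw [ae_map_iff hWmeas.aemeasurable hms]
    refine Filter.Eventually.of_forall (fun ω => ?_)
    simp [hWdef, hv0]
  have hptwise : ∀ᵐ w ∂ν, 2 * γ {g | ∀ n, lam' ≤ g + w n}
      ≤ γ {g | ∀ n, lam' - x ≤ g + w n} + γ {g | ∀ n, lam' + x ≤ g + w n} := by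
    filter_upwards [hw0] with w hw
    by_cases hbdd : BddAbove (range fun n => -w n)
    · set s := ⨆ n, (-w n) with hs
      have hs0 : 0 ≤ s := by
        have h := le_ciSup hbdd 0
        simpa [hw] using h
      have hset : ∀ r : ℝ, {g | ∀ n, r ≤ g + w n} = Ici (r + s) := by
        intro r
        ext g
        simp only [mem_setOf_eq, mem_Ici]
        constructor
        · intro h
          have h1 : ∀ n, -w n ≤ g - r := fun n => by linarith [h n]
          have h2 : s ≤ g - r := ciSup_le h1
          linarith
        · intro h n
          have h1 : -w n ≤ s := le_ciSup hbdd n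
          linarith
      rw [hset, hset, hset]
      have hane : a.toNNReal ≠ 0 := by
        simp only [ne_eq, Real.toNNReal_eq_zero, not_le]
        linarith
      have hc : (0:ℝ) ≤ lam' + s := by linarith
      have hkey := bm18_gauss_key hane hc hx
      rw [hγ]
      rw [show lam' - x + s = (lam' + s) - x from by ring,
        show lam' + x + s = (lam' + s) + x from by ring]
      exact hkey
    · have hempty : ∀ r : ℝ, {g | ∀ n, r ≤ g + w n} = (∅ : Set ℝ) := by
        intro r
        ext g
        simp only [mem_setOf_eq, mem_empty_iff_false, iff_false]
        intro h
        refine hbdd ⟨g - r, ?_⟩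
        rintro y ⟨n, rfl⟩
        show -w n ≤ g - r
        linarith [h n]
      simp [hempty]
  have hmeas_int : ∀ r : ℝ, Measurable (fun w : ℕ → ℝ => γ {g | ∀ n, r ≤ g + w n}) := by
    intro r
    exact measurable_measure_prodMk_left (hSmeas r)
  rw [hQ, hQ, hQ, ← lintegral_const_mul 2 (hmeas_int lam'),
    ← lintegral_add_left (hmeas_int (lam' - x))]
  exact lintegral_mono_ae hptwise

end BM18Aux

open Filter

theorem stmt18 {Ω : Type*} [MeasurableSpace Ω] (P : Measure Ω) [IsProbabilityMeasure P]
    (B : ℝ → Ω → ℝ) (hB : IsStandardBrownianMotion P B)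
    (M₀ a b lam : ℝ) (ha : 0 < a) (hab : a < b) (hlam : 0 < lam) :
    P {ω | ∃ t ∈ Set.Icc a b, |M₀ + B t ω| ≤ lam}
      ≤ P {ω | ∃ t ∈ Set.Icc a b, |B t ω| ≤ lam} := by
  classical
  -- a dense sequence in [a, b] starting at a
  obtain ⟨v, hv0, hvmem, hvdense⟩ :
      ∃ v : ℕ → ℝ, v 0 = a ∧ (∀ n, v n ∈ Set.Icc a b) ∧
        ∀ t ∈ Set.Icc a b, ∀ ε > 0, ∃ n, |v n - t| < ε := by
    haveI : Nonempty (Set.Icc a b) := ⟨⟨a, le_rfl, hab.le⟩⟩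
    set u : ℕ → Set.Icc a b := TopologicalSpace.denseSeq (Set.Icc a b) with hu
    refine ⟨fun n => if n = 0 then a else (u (n-1) : ℝ), by simp, ?_, ?_⟩
    · intro n
      by_cases h : n = 0
      · simp only [h, if_true]
        exact ⟨le_rfl, hab.le⟩
      · simp only [h, if_false]
        exact (u (n-1)).2
    · intro t ht ε hε
      have hd := TopologicalSpace.denseRange_denseSeq (Set.Icc a b)
      obtain ⟨m, hm⟩ := Metric.denseRange_iff.mp hd ⟨t, ht⟩ ε hε
      refine ⟨m+1, ?_⟩
      simp only [Nat.add_sub_cancel, Nat.succ_ne_zero, if_false]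
      have h2 : dist ((u m : ℝ)) t < ε := by
        rw [dist_comm]
        rw [Subtype.dist_eq] at hm
        exact hm
      rwa [Real.dist_eq] at h2
  have hva : ∀ n, a ≤ v n := fun n => (hvmem n).1
  have hvpos : ∀ n, 0 < v n := fun n => lt_of_lt_of_le ha (hva n)
  -- forward direction: from a time point to a sequence point
  have hFWD : ∀ ω, Continuous (fun t => B t ω) → ∀ (c d t : ℝ), t ∈ Set.Icc a b →
      B t ω ∈ Set.Ioo c d → ∃ n, B (v n) ω ∈ Set.Ioo c d := by
    intro ω hω c d t ht hmem
    have hc : ContinuousAt (fun t => B t ω) t := hω.continuousAt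
    have hrpos : 0 < min (d - B t ω) (B t ω - c) :=
      lt_min (by linarith [hmem.2]) (by linarith [hmem.1])
    obtain ⟨δ, hδ, hball⟩ := Metric.continuousAt_iff.mp hc _ hrpos
    obtain ⟨n, hn⟩ := hvdense t ht δ hδ
    have h2 := hball (show dist (v n) t < δ by rwa [Real.dist_eq])
    rw [Real.dist_eq, abs_lt] at h2
    have hm1 : (d - B t ω) ⊓ (B t ω - c) ≤ d - B t ω := min_le_left _ _
    have hm2 : (d - B t ω) ⊓ (B t ω - c) ≤ B t ω - c := min_le_right _ _
    refine ⟨n, ?_⟩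
    rw [Set.mem_Ioo]
    exact ⟨by linarith [h2.1], by linarith [h2.2]⟩
  -- backward direction: IVT
  have hBWD : ∀ ω, Continuous (fun t => B t ω) → ∀ (c d : ℝ), c < d →
      (∃ n, B (v n) ω < d) → (∃ m, c < B (v m) ω) →
      ∃ t ∈ Set.Icc a b, B t ω ∈ Set.Ioo c d := by
    rintro ω hω c d hcd ⟨n1, h1⟩ ⟨n2, h2⟩
    by_cases hca : c < B (v n1) ω
    · exact ⟨v n1, hvmem n1, hca, h1⟩
    push_neg at hca
    set y := (c + min d (B (v n2) ω)) / 2 with hy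
    have hymin : c < min d (B (v n2) ω) := lt_min hcd h2
    have hy1 : c < y := by rw [hy]; linarith
    have hy2 : y < d := by
      have : min d (B (v n2) ω) ≤ d := min_le_left _ _
      rw [hy]; linarith
    have hy3 : y < B (v n2) ω := by
      have : min d (B (v n2) ω) ≤ B (v n2) ω := min_le_right _ _
      rw [hy]; linarith
    have hsub : Set.uIcc (v n1) (v n2) ⊆ Set.Icc a b := by
      rw [Set.uIcc]
      refine Set.Icc_subset_Icc (le_inf (hva n1) (hva n2)) (sup_le (hvmem n1).2 (hvmem n2).2)
    have hmem' : y ∈ Set.uIcc (B (v n1) ω) (B (v n2) ω) := by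
      rw [Set.mem_uIcc]
      exact Or.inl ⟨by linarith, hy3.le⟩
    obtain ⟨t, htmem, hty⟩ := intermediate_value_uIcc (Continuous.continuousOn hω) hmem'
    have hty' : B t ω = y := hty
    exact ⟨t, hsub htmem, by rw [hty']; exact hy1, by rw [hty']; exact hy2⟩
  -- the families of events
  set Low : ℝ → Set Ω := fun r => ⋃ n, {ω | B (v n) ω < r} with hLow
  set High : ℝ → Set Ω := fun r => ⋃ n, {ω | r < B (v n) ω} with hHigh
  have hLowMeas : ∀ r, MeasurableSet (Low r) := fun r => MeasurableSet.iUnion fun n =>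
    measurableSet_lt (hB.measurable _) measurable_const
  have hHighMeas : ∀ r, MeasurableSet (High r) := fun r => MeasurableSet.iUnion fun n =>
    measurableSet_lt measurable_const (hB.measurable _)
  -- the core inequality
  have hCORE : ∀ lam' : ℝ, 0 < lam' →
      P (Low (lam' - M₀) ∩ High (-lam' - M₀)) ≤ P (Low lam' ∩ High (-lam')) := by
    intro lam' hlam'
    have hunion : ∀ (cc dd : ℝ), cc < dd → Low dd ∪ High cc = Set.univ := by
      intro cc dd h
      ext ω
      simp only [hLow, hHigh, Set.mem_union, Set.mem_iUnion, Set.mem_setOf_eq, Set.mem_univ,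
        iff_true]
      by_cases hc : B (v 0) ω < dd
      · exact Or.inl ⟨0, hc⟩
      · exact Or.inr ⟨0, lt_of_lt_of_le h (not_lt.mp hc)⟩
    have hie : ∀ (cc dd : ℝ), cc < dd →
        P (Low dd ∩ High cc) + 1 = P (Low dd) + P (High cc) := by
      intro cc dd h
      have h2 := measure_union_add_inter (μ := P) (Low dd) (hHighMeas cc)
      rw [hunion cc dd h, measure_univ] at h2
      rw [← h2, add_comm]
    have hsym : ∀ cc : ℝ, P (High cc) = P (Low (-cc)) := fun cc =>
      bm18_high_eq_low hB v hvpos cc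
    have hQcompl : ∀ r : ℝ, P (Low r) + P (⋂ n, {ω | r ≤ B (v n) ω}) = 1 := by
      intro r
      have hcompl : (⋂ n, {ω | r ≤ B (v n) ω}) = (Low r)ᶜ := by
        rw [hLow, Set.compl_iUnion]
        exact Set.iInter_congr fun n => by ext ω; simp
      rw [hcompl, measure_add_measure_compl (hLowMeas r)]
      exact measure_univ
    have hconv : 2 * P (⋂ n, {ω | lam' ≤ B (v n) ω})
        ≤ P (⋂ n, {ω | lam' - M₀ ≤ B (v n) ω}) + P (⋂ n, {ω | lam' + M₀ ≤ B (v n) ω}) := by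
      rcases le_total 0 M₀ with hM | hM
      · exact bm18_conv hB ha v hv0 hva hlam' hM
      · have h3 := bm18_conv hB ha v hv0 hva hlam' (neg_nonneg.mpr hM)
        have e1 : lam' - -M₀ = lam' + M₀ := by ring
        have e2 : lam' + -M₀ = lam' - M₀ := by ring
        rw [e1, e2, add_comm] at h3
        exact h3
    have hmain : P (Low (lam' - M₀)) + P (Low (lam' + M₀)) ≤ P (Low lam') + P (Low lam') := by
      have e1 := hQcompl (lam' - M₀)
      have e2 := hQcompl (lam' + M₀)
      have e3 := hQcompl lam'
      have hfin : P (⋂ n, {ω | lam' - M₀ ≤ B (v n) ω})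
          + P (⋂ n, {ω | lam' + M₀ ≤ B (v n) ω}) ≠ ⊤ :=
        ENNReal.add_ne_top.mpr ⟨measure_ne_top P _, measure_ne_top P _⟩
      apply ENNReal.le_of_add_le_add_right hfin
      calc P (Low (lam' - M₀)) + P (Low (lam' + M₀))
            + (P (⋂ n, {ω | lam' - M₀ ≤ B (v n) ω}) + P (⋂ n, {ω | lam' + M₀ ≤ B (v n) ω}))
          = (P (Low (lam' - M₀)) + P (⋂ n, {ω | lam' - M₀ ≤ B (v n) ω}))
            + (P (Low (lam' + M₀)) + P (⋂ n, {ω | lam' + M₀ ≤ B (v n) ω})) := by ring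
        _ = 1 + 1 := by rw [e1, e2]
        _ = (P (Low lam') + P (⋂ n, {ω | lam' ≤ B (v n) ω}))
            + (P (Low lam') + P (⋂ n, {ω | lam' ≤ B (v n) ω})) := by rw [e3]
        _ = (P (Low lam') + P (Low lam'))
            + (2 * P (⋂ n, {ω | lam' ≤ B (v n) ω})) := by ring
        _ ≤ (P (Low lam') + P (Low lam'))
            + (P (⋂ n, {ω | lam' - M₀ ≤ B (v n) ω}) + P (⋂ n, {ω | lam' + M₀ ≤ B (v n) ω})) :=
          add_le_add le_rfl hconv
    apply ENNReal.le_of_add_le_add_right (ENNReal.one_ne_top)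
    rw [hie _ _ (show -lam' - M₀ < lam' - M₀ by linarith),
      hie _ _ (show -lam' < lam' by linarith), hsym, hsym, neg_neg,
      show -(-lam' - M₀) = lam' + M₀ from by ring]
    exact hmain
  -- the decreasing approximating events
  set R : ℕ → Set Ω := fun k => Low (lam + 1/((k:ℝ)+1)) ∩ High (-(lam + 1/((k:ℝ)+1))) with hR
  have hRmeas : ∀ k, MeasurableSet (R k) := fun k => (hLowMeas _).inter (hHighMeas _)
  have hstep : ∀ k : ℕ, P {ω | ∃ t ∈ Set.Icc a b, |M₀ + B t ω| ≤ lam} ≤ P (R k) := by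
    intro k
    have hεpos : (0:ℝ) < 1/((k:ℝ)+1) := by positivity
    set lam' : ℝ := lam + 1/((k:ℝ)+1) with hlam'def
    have hlam' : 0 < lam' := by rw [hlam'def]; linarith
    have hsub : {ω | ∃ t ∈ Set.Icc a b, |M₀ + B t ω| ≤ lam}
        ⊆ {ω | ∃ t ∈ Set.Icc a b, B t ω ∈ Set.Ioo (-lam' - M₀) (lam' - M₀)} := by
      rintro ω ⟨t, ht, habs⟩
      rw [abs_le] at habs
      refine ⟨t, ht, ?_, ?_⟩
      · have := habs.1; rw [hlam'def]; simp only [Set.mem_Ioo] at *; linarith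
      · have := habs.2; rw [hlam'def]; linarith
    have hEQ : {ω | ∃ t ∈ Set.Icc a b, B t ω ∈ Set.Ioo (-lam' - M₀) (lam' - M₀)}
        =ᵐ[P] ((Low (lam' - M₀) ∩ High (-lam' - M₀) : Set Ω)) := by
      have hcd : -lam' - M₀ < lam' - M₀ := by linarith
      filter_upwards [hB.cont] with ω hω
      apply eq_iff_iff.mpr
      constructor
      · rintro ⟨t, ht, hmem⟩
        obtain ⟨n, hn⟩ := hFWD ω hω _ _ t ht hmem
        exact ⟨Set.mem_iUnion.mpr ⟨n, hn.2⟩, Set.mem_iUnion.mpr ⟨n, hn.1⟩⟩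
      · rintro ⟨hlow, hhigh⟩
        obtain ⟨n1, h1⟩ := Set.mem_iUnion.mp hlow
        obtain ⟨n2, h2⟩ := Set.mem_iUnion.mp hhigh
        exact hBWD ω hω _ _ hcd ⟨n1, h1⟩ ⟨n2, h2⟩
    calc P {ω | ∃ t ∈ Set.Icc a b, |M₀ + B t ω| ≤ lam}
        ≤ P {ω | ∃ t ∈ Set.Icc a b, B t ω ∈ Set.Ioo (-lam' - M₀) (lam' - M₀)} :=
          measure_mono hsub
      _ = P (Low (lam' - M₀) ∩ High (-lam' - M₀)) := measure_congr hEQ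
      _ ≤ P (Low lam' ∩ High (-lam')) := hCORE lam' hlam'
      _ = P (R k) := rfl
  have hmonoR : Antitone R := by
    intro k l hkl
    have h1 : lam + 1/((l:ℝ)+1) ≤ lam + 1/((k:ℝ)+1) := by
      have h2 : ((k:ℝ)+1) ≤ ((l:ℝ)+1) := by
        have : (k:ℝ) ≤ (l:ℝ) := by exact_mod_cast hkl
        linarith
      have := one_div_le_one_div_of_le (by positivity) h2
      linarith
    rintro ω ⟨hlow, hhigh⟩
    constructor
    · obtain ⟨n, hn⟩ := Set.mem_iUnion.mp hlow
      exact Set.mem_iUnion.mpr ⟨n, lt_of_lt_of_le hn h1⟩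
    · obtain ⟨n, hn⟩ := Set.mem_iUnion.mp hhigh
      exact Set.mem_iUnion.mpr ⟨n, lt_of_le_of_lt (neg_le_neg h1) hn⟩
  have hlim : P (⋂ k, R k) = ⨅ k, P (R k) :=
    Directed.measure_iInter (fun k => (hRmeas k).nullMeasurableSet)
      (hmonoR.directed_ge) ⟨0, measure_ne_top P _⟩
  have hfinal : P (⋂ k, R k) ≤ P {ω | ∃ t ∈ Set.Icc a b, |B t ω| ≤ lam} := by
    apply measure_mono_ae
    filter_upwards [hB.cont] with ω hω hmem
    have hT : ∀ k : ℕ, ∃ t ∈ Set.Icc a b,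
        B t ω ∈ Set.Ioo (-(lam + 1/((k:ℝ)+1))) (lam + 1/((k:ℝ)+1)) := by
      intro k
      have hεpos : (0:ℝ) < 1/((k:ℝ)+1) := by positivity
      have hk := Set.mem_iInter.mp hmem k
      obtain ⟨n1, h1⟩ := Set.mem_iUnion.mp hk.1
      obtain ⟨n2, h2⟩ := Set.mem_iUnion.mp hk.2
      exact hBWD ω hω _ _ (by linarith) ⟨n1, h1⟩ ⟨n2, h2⟩
    choose t htmem htval using hT
    obtain ⟨t₀, ht₀, φ, hφmono, hφtend⟩ :=
      (isCompact_Icc (a := a) (b := b)).tendsto_subseq htmem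
    refine ⟨t₀, ht₀, ?_⟩
    have habs : Tendsto (fun j => |B (t (φ j)) ω|) atTop (nhds |B t₀ ω|) :=
      ((hω.tendsto t₀).comp hφtend).abs
    have hgtend : Tendsto (fun j : ℕ => lam + 1/((j:ℝ)+1)) atTop (nhds (lam + 0)) :=
      tendsto_const_nhds.add tendsto_one_div_add_atTop_nhds_zero_nat
    rw [add_zero] at hgtend
    apply le_of_tendsto_of_tendsto' habs hgtend
    intro j
    have hφj : (j:ℝ) ≤ (φ j : ℝ) := by exact_mod_cast hφmono.le_apply
    have hb1 : 1/((φ j :ℝ)+1) ≤ 1/((j:ℝ)+1) :=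
      one_div_le_one_div_of_le (by positivity) (by linarith)
    have hval := htval (φ j)
    rw [Set.mem_Ioo] at hval
    rw [abs_le]
    constructor <;> [linarith [hval.1]; linarith [hval.2]]
  calc P {ω | ∃ t ∈ Set.Icc a b, |M₀ + B t ω| ≤ lam}
      ≤ ⨅ k, P (R k) := le_iInf hstep
    _ = P (⋂ k, R k) := hlim.symm
    _ ≤ P {ω | ∃ t ∈ Set.Icc a b, |B t ω| ≤ lam} := hfinal
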